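/- For every string P of length n with δ distinct characters, there exists a pair of characters (a, b) occurring in P such that the 2-sparse pattern sparse^{(a,b)}(P) contains every distinct character of P; hence |sparse(P)| ≥ δ. -/

import Mathlib

/-- For every nonempty string `P`, there is a pair of characters `(a, b)` occurring in `P` and a
substring of `P` starting with `a`, ending with `b`, with no occurrence of `a` or `b` in its
interior (a 2-sparse pattern w.r.t. `(a,b)`), that contains every distinct character of `P`;
hence its length, and so `|sparse(P)|`, is at least `δ = P.toFinset.card`. -/
theorem stmt12 {α : Type*} [DecidableEq α] (P : List α) (hP : P ≠ []) :
    ∃ a b, a ∈ P ∧ b ∈ P ∧ ∃ i j, ∃ hj : j < P.length, ∃ hij : i ≤ j,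
      P.get ⟨i, lt_of_le_of_lt hij hj⟩ = a ∧ P.get ⟨j, hj⟩ = b ∧
      (∀ l (hl : l < P.length), i < l → l < j →
        P.get ⟨l, hl⟩ ≠ a ∧ P.get ⟨l, hl⟩ ≠ b) ∧
      (∀ c ∈ P, c ∈ (P.drop i).take (j + 1 - i)) ∧
      P.toFinset.card ≤ j + 1 - i := by
  classical
  obtain ⟨p, hp⟩ : ∃ p, p ∈ P := List.exists_mem_of_ne_nil P hP
  -- the predicate: suffix from k contains everything
  have hex : ∃ k, ¬ ∀ c ∈ P, c ∈ P.drop k := by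
    refine ⟨P.length, ?_⟩
    simp only [List.drop_length]
    push_neg
    exact ⟨p, hp, by simp⟩
  set N := Nat.find hex with hN
  have hNpos : 0 < N := by
    rw [hN]
    by_contra h
    simp only [not_lt, Nat.le_zero] at h
    have hsp := Nat.find_spec hex
    rw [h] at hsp
    exact hsp (by simp)
  set i := N - 1 with hi
  have hPdi : ∀ c ∈ P, c ∈ P.drop i :=
    of_not_not (Nat.find_min hex (by omega))
  have hnPdi1 : ¬ ∀ c ∈ P, c ∈ P.drop (i + 1) := by
    have : i + 1 = N := by omega
    rw [this]; exact Nat.find_spec hex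
  set Q := P.drop i with hQ
  have hiP : i < P.length := by
    by_contra h
    push_neg at h
    have hQnil : Q = [] := by simp [hQ, List.drop_eq_nil_iff.mpr h]
    have := hPdi p hp
    rw [hQnil] at this
    simp at this
  have hQdrop : Q = P[i] :: P.drop (i + 1) := by
    rw [hQ, List.drop_eq_getElem_cons hiP]
  -- a = P[i]; a not in drop (i+1)
  push_neg at hnPdi1
  obtain ⟨c₀, hc₀P, hc₀⟩ := hnPdi1
  have hc₀Q : c₀ ∈ Q := hPdi c₀ hc₀P
  have ha_eq : c₀ = P[i] := by
    rw [hQdrop] at hc₀Q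
    rcases List.mem_cons.mp hc₀Q with h | h
    · exact h
    · exact absurd h hc₀
  have haNot : P[i] ∉ P.drop (i + 1) := ha_eq ▸ hc₀
  -- now choose m
  have hQlen : Q.length = P.length - i := by simp [hQ]
  have hQpos : 0 < Q.length := by omega
  have hexm : ∃ m, ∀ c ∈ P, c ∈ Q.take (m + 1) := by
    refine ⟨Q.length - 1, ?_⟩
    have : Q.length - 1 + 1 = Q.length := by omega
    rw [this, List.take_length]
    exact hPdi
  set m := Nat.find hexm with hm
  have hmspec : ∀ c ∈ P, c ∈ Q.take (m + 1) := Nat.find_spec hexm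
  have hmQ : m < Q.length := by
    by_contra h
    push_neg at h
    have h1 : Q.take m = Q := List.take_of_length_le h
    have h2 : Q.take (m + 1) = Q.take m := by
      rw [h1, List.take_of_length_le (by omega)]
    rcases Nat.eq_zero_or_pos m with h0 | h0
    · omega
    · have := Nat.find_min hexm (m := m - 1) (by omega)
      push_neg at this
      obtain ⟨c, hcP, hc⟩ := this
      have hmem : c ∈ Q.take (m - 1 + 1) := by
        have hme : m - 1 + 1 = m := by omega
        rw [hme, h1]; exact hPdi c hcP
      exact hc hmem
  -- b = Q[m], not in Q.take m
  have hbNot : Q[m] ∉ Q.take m := by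
    rcases Nat.eq_zero_or_pos m with h0 | h0
    · simp [h0]
    · have hmin := Nat.find_min hexm (m := m - 1) (by omega)
      push_neg at hmin
      obtain ⟨c, hcP, hc⟩ := hmin
      have hme : m - 1 + 1 = m := by omega
      rw [hme] at hc
      have hc1 : c ∈ Q.take (m + 1) := hmspec c hcP
      obtain ⟨k, hk, hkc⟩ := List.mem_iff_getElem.mp hc1
      have hklen : k < Q.length := by
        have := Q.length_take_le (m+1)
        simp only [List.length_take] at hk
        omega
      have hkm : k ≤ m := by
        simp only [List.length_take] at hk; omega
      rw [List.getElem_take] at hkc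
      rcases lt_or_eq_of_le hkm with hlt | heq
      · exfalso
        apply hc
        exact List.mem_iff_getElem.mpr ⟨k, by simp [List.length_take]; omega,
          by rw [List.getElem_take]; exact hkc⟩
      · subst heq
        rw [hkc]
        exact hc
  have hjP : i + m < P.length := by omega
  have hbP : Q[m] = P[i + m] := (List.getElem_drop' (xs := P) (j := m) hjP).symm
  refine ⟨P[i], Q[m], List.getElem_mem hiP, hbP ▸ List.getElem_mem hjP,
    i, i + m, hjP, Nat.le_add_right i m, ?_, ?_, ?_, ?_, ?_⟩
  · simp [List.get_eq_getElem]
  · simp [List.get_eq_getElem, hbP]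
  · intro l hl hil hlj
    constructor
    · intro hcon
      apply haNot
      have hll : l - (i + 1) < (P.drop (i + 1)).length := by
        simp only [List.length_drop]; omega
      refine List.mem_iff_getElem.mpr ⟨l - (i + 1), hll, ?_⟩
      have : i + 1 + (l - (i + 1)) = l := by omega
      rw [show (P.drop (i+1))[l - (i+1)]'hll = P[i + 1 + (l - (i+1))]'(by omega) from
        (List.getElem_drop' (xs := P) (by omega)).symm]
      simp only [List.get_eq_getElem] at hcon
      rw [← hcon]
      congr 1
    · intro hcon
      apply hbNot
      have hliQ : l - i < Q.length := by rw [hQlen]; omega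
      have hPlQ : P.get ⟨l, hl⟩ = Q[l - i] := by
        simp only [List.get_eq_getElem, hQ]
        rw [show (P.drop i)[l - i]'(by rw [← hQ, hQlen]; omega) = P[i + (l - i)]'(by omega) from
          (List.getElem_drop' (xs := P) (by omega)).symm]
        congr 1
        omega
      refine List.mem_iff_getElem.mpr ⟨l - i, by simp [List.length_take]; omega, ?_⟩
      rw [List.getElem_take, ← hPlQ, hcon]
  · intro c hc
    have : i + m + 1 - i = m + 1 := by omega
    rw [this]
    exact hmspec c hc
  · have h1 : P.toFinset ⊆ (Q.take (m + 1)).toFinset := by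
      intro c hc
      simp only [List.mem_toFinset] at hc ⊢
      exact hmspec c hc
    have h2 : P.toFinset.card ≤ (Q.take (m + 1)).toFinset.card := Finset.card_le_card h1
    have h3 := (Q.take (m + 1)).toFinset_card_le
    have h4 : (Q.take (m + 1)).length ≤ m + 1 := List.length_take_le _ _
    omega
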